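/- arXiv:2210.17330 — 3 statements merged into one kernel-verified Lean document; each statement's English description precedes it below -/
import Mathlib

section
/- Let X be a finite set and let m₁, m₂ be mass functions on X. Then m₁ ∩ m₂ ≤_s m₁ and m₁ ∩ m₂ ≤_s m₂, where (m₁ ∩ m₂)(Y) = Σ_{Y₁ ∩ Y₂ = Y} m₁(Y₁)·m₂(Y₂) is the unnormalized conjunctive (Dempster) combination. -/
/-- A (Dempster–Shafer) mass function on a finite set `X`: a nonnegative real-valued
function on subsets of `X` summing to `1`. -/
def IsMassFunction {X : Type*} [Fintype X] (m : Finset X → ℝ) : Prop :=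
  (∀ Y, 0 ≤ m Y) ∧ (∑ Y : Finset X, m Y = 1)

/-- Unnormalized conjunctive (Dempster) combination:
`(m₁ ∩ m₂)(Y) = Σ_{Y₁ ∩ Y₂ = Y} m₁(Y₁)·m₂(Y₂)`. -/
def conjComb {X : Type*} [Fintype X] [DecidableEq X] (m₁ m₂ : Finset X → ℝ)
    (Y : Finset X) : ℝ :=
  ∑ p : Finset X × Finset X, if p.1 ∩ p.2 = Y then m₁ p.1 * m₂ p.2 else 0

/-- The s-ordering on mass functions: `m ≤_s m'` iff there is a (generalized stochastic)
matrix `S` with nonnegative entries, columns summing to one, `S(W,Y) > 0 → W ⊆ Y`,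
and `m(W) = Σ_Y S(W,Y)·m'(Y)`. -/
def sLE {X : Type*} [Fintype X] (m m' : Finset X → ℝ) : Prop :=
  ∃ S : Finset X → Finset X → ℝ,
    (∀ W Y, 0 ≤ S W Y) ∧
    (∀ Y, ∑ W : Finset X, S W Y = 1) ∧
    (∀ W Y, 0 < S W Y → W ⊆ Y) ∧
    (∀ W, m W = ∑ Y : Finset X, S W Y * m' Y)

/-- `m₁ ∩ m₂ ≤_s m₁` and `m₁ ∩ m₂ ≤_s m₂`. -/
theorem conjComb_sLE {X : Type*} [Fintype X] [DecidableEq X] (m₁ m₂ : Finset X → ℝ)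
    (h₁ : IsMassFunction m₁) (h₂ : IsMassFunction m₂) :
    sLE (conjComb m₁ m₂) m₁ ∧ sLE (conjComb m₁ m₂) m₂ := by
  constructor
  · refine ⟨fun W Y => ∑ Z : Finset X, if Y ∩ Z = W then m₂ Z else 0, ?_, ?_, ?_, ?_⟩
    · intro W Y
      exact Finset.sum_nonneg fun Z _ => by
        split <;> [exact h₂.1 Z; rfl]
    · intro Y
      rw [Finset.sum_comm]
      have : ∀ Z : Finset X, (∑ W : Finset X, if Y ∩ Z = W then m₂ Z else 0) = m₂ Z := by
        intro Z
        simp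
      simp_rw [this]
      exact h₂.2
    · intro W Y hpos
      by_contra hns
      have : (∑ Z : Finset X, if Y ∩ Z = W then m₂ Z else 0) = 0 := by
        apply Finset.sum_eq_zero
        intro Z _
        have : ¬ (Y ∩ Z = W) := fun h => hns (h ▸ Finset.inter_subset_left)
        simp [this]
      simp [this] at hpos
    · intro W
      rw [conjComb, Fintype.sum_prod_type]
      apply Finset.sum_congr rfl
      intro Y _
      rw [Finset.sum_mul]
      apply Finset.sum_congr rfl
      intro Z _
      split <;> ring
  · refine ⟨fun W Y => ∑ Z : Finset X, if Z ∩ Y = W then m₁ Z else 0, ?_, ?_, ?_, ?_⟩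
    · intro W Y
      exact Finset.sum_nonneg fun Z _ => by
        split <;> [exact h₁.1 Z; rfl]
    · intro Y
      rw [Finset.sum_comm]
      have : ∀ Z : Finset X, (∑ W : Finset X, if Z ∩ Y = W then m₁ Z else 0) = m₁ Z := by
        intro Z
        simp
      simp_rw [this]
      exact h₁.2
    · intro W Y hpos
      by_contra hns
      have : (∑ Z : Finset X, if Z ∩ Y = W then m₁ Z else 0) = 0 := by
        apply Finset.sum_eq_zero
        intro Z _
        have : ¬ (Z ∩ Y = W) := fun h => hns (h ▸ Finset.inter_subset_right)
        simp [this]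
      simp [this] at hpos
    · intro W
      rw [conjComb, Fintype.sum_prod_type_right]
      apply Finset.sum_congr rfl
      intro Y _
      rw [Finset.sum_mul]
      apply Finset.sum_congr rfl
      intro Z _
      split <;> ring
end

section
/- Let X be a finite set and let m₁, m₂ be mass functions on X. Then m₁ ≤_↑ m₁ ∪ m₂ and m₂ ≤_↑ m₁ ∪ m₂, where (m₁ ∪ m₂)(Y) = Σ_{Y₁ ∪ Y₂ = Y} m₁(Y₁)·m₂(Y₂) is the disjunctive combination. -/
/-- Disjunctive combination: `(m₁ ∪ m₂)(Y) = Σ_{Y₁ ∪ Y₂ = Y} m₁(Y₁)·m₂(Y₂)`. -/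
def disjComb {X : Type*} [Fintype X] [DecidableEq X] (m₁ m₂ : Finset X → ℝ)
    (Y : Finset X) : ℝ :=
  ∑ p : Finset X × Finset X, if p.1 ∪ p.2 = Y then m₁ p.1 * m₂ p.2 else 0

/-- The up-set restricted order: `m ≤_↑ m'` iff for every upward closed family `𝒱`
of subsets of `X`, `Σ_{Y ∈ 𝒱} m(Y) ≤ Σ_{Y ∈ 𝒱} m'(Y)`. -/
def upLE {X : Type*} [Fintype X] (m m' : Finset X → ℝ) : Prop :=
  ∀ V : Finset (Finset X), (∀ Y ∈ V, ∀ Z : Finset X, Y ⊆ Z → Z ∈ V) →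
    (∑ Y ∈ V, m Y) ≤ ∑ Y ∈ V, m' Y

lemma disjComb_sum_upset {X : Type*} [Fintype X] [DecidableEq X] (m₁ m₂ : Finset X → ℝ)
    (V : Finset (Finset X)) :
    ∑ Y ∈ V, disjComb m₁ m₂ Y =
      ∑ p : Finset X × Finset X, if p.1 ∪ p.2 ∈ V then m₁ p.1 * m₂ p.2 else 0 := by
  unfold disjComb
  rw [Finset.sum_comm]
  refine Finset.sum_congr rfl fun p _ => ?_
  by_cases h : p.1 ∪ p.2 ∈ V
  · rw [Finset.sum_ite_eq V (p.1 ∪ p.2) (fun _ => m₁ p.1 * m₂ p.2), if_pos h]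
  · rw [if_neg h]
    apply Finset.sum_eq_zero
    intro Y hY
    rw [if_neg]
    rintro rfl
    exact h hY

/-- `m₁ ≤_↑ m₁ ∪ m₂` and `m₂ ≤_↑ m₁ ∪ m₂`. -/
theorem upLE_disjComb {X : Type*} [Fintype X] [DecidableEq X] (m₁ m₂ : Finset X → ℝ)
    (h₁ : IsMassFunction m₁) (h₂ : IsMassFunction m₂) :
    upLE m₁ (disjComb m₁ m₂) ∧ upLE m₂ (disjComb m₁ m₂) := by
  constructor
  · intro V hV
    rw [disjComb_sum_upset]
    have key : (∑ Y ∈ V, m₁ Y) =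
        ∑ p : Finset X × Finset X, if p.1 ∈ V then m₁ p.1 * m₂ p.2 else 0 := by
      rw [Fintype.sum_prod_type]
      have h : ∀ a : Finset X,
          (∑ b : Finset X, if a ∈ V then m₁ a * m₂ b else 0) = if a ∈ V then m₁ a else 0 := by
        intro a
        by_cases h : a ∈ V
        · simp [h, ← Finset.mul_sum, h₂.2]
        · simp [h]
      simp only [h]
      rw [Finset.sum_ite_mem, Finset.univ_inter]
    rw [key]
    apply Finset.sum_le_sum
    intro p _
    by_cases h : p.1 ∈ V
    · rw [if_pos h, if_pos (hV p.1 h _ Finset.subset_union_left)]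
    · rw [if_neg h]
      split_ifs
      · exact mul_nonneg (h₁.1 _) (h₂.1 _)
      · exact le_refl 0
  · intro V hV
    rw [disjComb_sum_upset]
    have key : (∑ Y ∈ V, m₂ Y) =
        ∑ p : Finset X × Finset X, if p.2 ∈ V then m₁ p.1 * m₂ p.2 else 0 := by
      rw [Fintype.sum_prod_type_right]
      have h : ∀ b : Finset X,
          (∑ a : Finset X, if b ∈ V then m₁ a * m₂ b else 0) = if b ∈ V then m₂ b else 0 := by
        intro b
        by_cases h : b ∈ V
        · simp [h, ← Finset.sum_mul, h₁.2]
        · simp [h]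
      simp only [h]
      rw [Finset.sum_ite_mem, Finset.univ_inter]
    rw [key]
    apply Finset.sum_le_sum
    intro p _
    by_cases h : p.2 ∈ V
    · rw [if_pos h, if_pos (hV p.2 h _ Finset.subset_union_right)]
    · rw [if_neg h]
      split_ifs
      · exact mul_nonneg (h₁.1 _) (h₂.1 _)
      · exact le_refl 0
end

section
/- Let X be a finite set, let S₁, S₂ ⊆ X × X be substitution relations, and let m₁, m₂ be mass functions on X. Then m₁ ∩_S m₂ ≤_↑ m₁ ∪_S m₂. -/
open scoped Classical in
/-- Substitution image of an agenda `Z ⊆ X` under a substitution relation `S ⊆ X × X`: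
`Sub(Z) = {n | ∃ m ∈ Z, S(n,m)}`. -/
noncomputable def subImage {X : Type*} [Fintype X] (S : Set (X × X)) (Z : Finset X) :
    Finset X :=
  Finset.univ.filter fun n => ∃ m ∈ Z, (n, m) ∈ S

/-- Substitution-conjunctive combination:
`(m₁ ∩_S m₂)(Y) = Σ { m₁(Z₁)·m₂(Z₂) : Sub₂(Z₁) ∩ Sub₁(Z₂) = Y }`. -/
noncomputable def substConj {X : Type*} [Fintype X] [DecidableEq X]
    (S₁ S₂ : Set (X × X)) (m₁ m₂ : Finset X → ℝ) (Y : Finset X) : ℝ :=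
  ∑ p : Finset X × Finset X,
    if subImage S₂ p.1 ∩ subImage S₁ p.2 = Y then m₁ p.1 * m₂ p.2 else 0

/-- Substitution-disjunctive combination:
`(m₁ ∪_S m₂)(Y) = Σ { m₁(Z₁)·m₂(Z₂) : Sub₂(Z₁) ∪ Sub₁(Z₂) = Y }`. -/
noncomputable def substDisj {X : Type*} [Fintype X] [DecidableEq X]
    (S₁ S₂ : Set (X × X)) (m₁ m₂ : Finset X → ℝ) (Y : Finset X) : ℝ :=
  ∑ p : Finset X × Finset X,
    if subImage S₂ p.1 ∪ subImage S₁ p.2 = Y then m₁ p.1 * m₂ p.2 else 0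

/-- `m₁ ∩_S m₂ ≤_↑ m₁ ∪_S m₂`. -/
theorem substConj_upLE_substDisj {X : Type*} [Fintype X] [DecidableEq X]
    (S₁ S₂ : Set (X × X)) (m₁ m₂ : Finset X → ℝ)
    (h₁ : IsMassFunction m₁) (h₂ : IsMassFunction m₂) :
    upLE (substConj S₁ S₂ m₁ m₂) (substDisj S₁ S₂ m₁ m₂) := by
  intro V hV
  unfold substConj substDisj
  rw [Finset.sum_comm (s := V), Finset.sum_comm (s := V)]
  apply Finset.sum_le_sum
  intro p _
  rw [Finset.sum_ite_eq V, Finset.sum_ite_eq V]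
  have hnn : 0 ≤ m₁ p.1 * m₂ p.2 := mul_nonneg (h₁.1 p.1) (h₂.1 p.2)
  by_cases h : subImage S₂ p.1 ∩ subImage S₁ p.2 ∈ V
  · have : subImage S₂ p.1 ∪ subImage S₁ p.2 ∈ V :=
      hV _ h _ (Finset.inter_subset_left.trans Finset.subset_union_left)
    simp [h, this]
  · simp only [h, if_false]
    split <;> simp [hnn]
end
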